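/- Let C be a finite d-dimensional simplicial complex and let C' be obtained from C by a Pachner move of dimension k on a k-simplex A (i.e., the link of A in C is the boundary of a (d-k)-simplex B not in C; delete all simplices containing A and add B together with all joins of B with proper faces of A). Then the Euler characteristic of C' equals the Euler characteristic of C. -/

import Mathlib

open Finset

/-- A finite abstract simplicial complex: nonempty simplices, closed under nonempty subsets. -/
def IsComplex (C : Finset (Finset ℕ)) : Prop :=
  ∀ S ∈ C, S ≠ ∅ ∧ ∀ T, T ⊆ S → T ≠ ∅ → T ∈ C

/-- Pure of dimension d: every simplex lies in a simplex of cardinality d+1. -/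
def IsPure (d : ℕ) (C : Finset (Finset ℕ)) : Prop :=
  ∀ S ∈ C, ∃ M ∈ C, S ⊆ M ∧ M.card = d + 1

/-- The link of a simplex A in C. -/
def slink (A : Finset ℕ) (C : Finset (Finset ℕ)) : Finset (Finset ℕ) :=
  C.filter (fun L => Disjoint A L ∧ A ∪ L ∈ C)

/-- The boundary of a simplex B: all nonempty proper subsets of B. -/
def sbdry (B : Finset ℕ) : Finset (Finset ℕ) :=
  B.powerset.filter (fun S => S ≠ ∅ ∧ S ≠ B)

/-- The Pachner move on A with inserted simplex B: delete all simplices containing A,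
add B together with the joins of B with the proper (possibly empty) faces of A. -/
def pachner (C : Finset (Finset ℕ)) (A B : Finset ℕ) : Finset (Finset ℕ) :=
  C.filter (fun S => ¬ A ⊆ S) ∪ (A.powerset.filter (fun F => F ≠ A)).image (fun F => B ∪ F)

/-- Number of i-dimensional simplices (cardinality i+1). -/
def fcount (i : ℕ) (C : Finset (Finset ℕ)) : ℕ :=
  (C.filter (fun S => S.card = i + 1)).card

/-- Euler characteristic: alternating sum of face numbers. -/
def eulerChar (C : Finset (Finset ℕ)) : ℤ :=
  ∑ S ∈ C, (-1 : ℤ) ^ (S.card - 1)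

/-- A Pachner move preserves the Euler characteristic. -/
private lemma aux_prop_sum (n : ℕ) (X : Finset ℕ) (hX : X ≠ ∅) (hXcard : X.card = n + 1) :
    ∑ L ∈ X.powerset.filter (fun L => L ≠ X), (-1 : ℤ) ^ L.card = (-1) ^ n := by
  have h1 : X.powerset.filter (fun L => L ≠ X) = X.powerset.erase X := by
    ext L; simp [Finset.mem_erase, and_comm]
  rw [h1]
  have h2 := Finset.sum_erase_add X.powerset (fun L => (-1 : ℤ) ^ L.card)
      (Finset.mem_powerset_self X)
  have h3 : ∑ L ∈ X.powerset, (-1 : ℤ) ^ L.card = 0 := by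
    rw [Finset.sum_powerset_neg_one_pow_card]; simp [hX]
  rw [h3] at h2
  have h4 : ∑ L ∈ X.powerset.erase X, (-1:ℤ)^L.card = -(-1)^X.card := by linarith
  rw [h4, hXcard, pow_succ]; ring

theorem pachner_preserves_eulerChar (d k : ℕ) (hk : k ≤ d)
    (C : Finset (Finset ℕ)) (A B : Finset ℕ)
    (hC : IsComplex C) (hpure : IsPure d C)
    (hA : A ∈ C) (hAcard : A.card = k + 1)
    (hBcard : B.card = d - k + 1) (hB : B ∉ C)
    (hdisj : Disjoint A B)
    (hlink : slink A C = sbdry B) :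
    eulerChar (pachner C A B) = eulerChar C := by
  classical
  have hBne : B ≠ ∅ := by
    intro h; rw [h, Finset.card_empty] at hBcard; omega
  have hAne : A ≠ ∅ := by
    intro h; rw [h, Finset.card_empty] at hAcard; omega
  -- deleted simplices
  have hdelset : C.filter (fun S => A ⊆ S) =
      (B.powerset.filter (fun L => L ≠ B)).image (fun L => A ∪ L) := by
    ext S
    simp only [Finset.mem_filter, Finset.mem_image, Finset.mem_powerset]
    constructor
    · rintro ⟨hS, hAS⟩
      by_cases hSA : S = A
      · exact ⟨∅, ⟨Finset.empty_subset _, fun h => hBne h.symm⟩, by simp [hSA]⟩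
      · have hLne : S \ A ≠ ∅ := by
          intro h
          exact hSA (Finset.Subset.antisymm (Finset.sdiff_eq_empty_iff_subset.mp h) hAS)
        have hLC : S \ A ∈ C := (hC S hS).2 _ Finset.sdiff_subset hLne
        have hLlink : S \ A ∈ slink A C := by
          simp only [slink, Finset.mem_filter]
          exact ⟨hLC, Finset.disjoint_sdiff,
            by rw [Finset.union_sdiff_of_subset hAS]; exact hS⟩
        rw [hlink] at hLlink
        simp only [sbdry, Finset.mem_filter, Finset.mem_powerset] at hLlink
        exact ⟨S \ A, ⟨hLlink.1, hLlink.2.2⟩, Finset.union_sdiff_of_subset hAS⟩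
    · rintro ⟨L, ⟨hLB, hLne⟩, rfl⟩
      by_cases hL : L = ∅
      · subst hL
        rw [Finset.union_empty]
        exact ⟨hA, Finset.Subset.refl A⟩
      · have hmem : L ∈ sbdry B := by
          simp only [sbdry, Finset.mem_filter, Finset.mem_powerset]
          exact ⟨hLB, hL, hLne⟩
        rw [← hlink] at hmem
        simp only [slink, Finset.mem_filter] at hmem
        exact ⟨hmem.2.2, Finset.subset_union_left⟩
  -- sum over deleted simplices
  have hdelsum : ∑ S ∈ C.filter (fun S => A ⊆ S), (-1:ℤ)^(S.card - 1) = (-1)^d := by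
    rw [hdelset, Finset.sum_image ?_]
    · have hcong : ∀ L ∈ B.powerset.filter (fun L => L ≠ B),
          (-1:ℤ)^((A ∪ L).card - 1) = (-1)^k * (-1)^L.card := by
        intro L hL
        simp only [Finset.mem_filter, Finset.mem_powerset] at hL
        have hc : (A ∪ L).card = A.card + L.card :=
          Finset.card_union_of_disjoint (hdisj.mono_right hL.1)
        rw [hc, hAcard]
        have he : k + 1 + L.card - 1 = k + L.card := by omega
        rw [he, pow_add]
      rw [Finset.sum_congr rfl hcong, ← Finset.mul_sum,
        aux_prop_sum (d - k) B hBne hBcard, ← pow_add]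
      congr 1; omega
    · intro L1 h1 L2 h2 h
      simp only [Finset.mem_coe, Finset.mem_filter, Finset.mem_powerset] at h1 h2
      have d1 : Disjoint A L1 := hdisj.mono_right h1.1
      have d2 : Disjoint A L2 := hdisj.mono_right h2.1
      calc L1 = (A ∪ L1) \ A := (Finset.union_sdiff_cancel_left d1).symm
        _ = (A ∪ L2) \ A := by rw [show A ∪ L1 = A ∪ L2 from h]
        _ = L2 := Finset.union_sdiff_cancel_left d2
  -- sum over added simplices
  have haddsum : ∑ S ∈ (A.powerset.filter (fun F => F ≠ A)).image (fun F => B ∪ F),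
      (-1:ℤ)^(S.card - 1) = (-1)^d := by
    rw [Finset.sum_image ?_]
    · have hcong : ∀ F ∈ A.powerset.filter (fun F => F ≠ A),
          (-1:ℤ)^((B ∪ F).card - 1) = (-1)^(d-k) * (-1)^F.card := by
        intro F hF
        simp only [Finset.mem_filter, Finset.mem_powerset] at hF
        have hc : (B ∪ F).card = B.card + F.card :=
          Finset.card_union_of_disjoint (hdisj.symm.mono_right hF.1)
        rw [hc, hBcard]
        have he : d - k + 1 + F.card - 1 = (d - k) + F.card := by omega
        rw [he, pow_add]
      rw [Finset.sum_congr rfl hcong, ← Finset.mul_sum,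
        aux_prop_sum k A hAne hAcard, ← pow_add]
      congr 1; omega
    · intro F1 h1 F2 h2 h
      simp only [Finset.mem_coe, Finset.mem_filter, Finset.mem_powerset] at h1 h2
      have d1 : Disjoint B F1 := hdisj.symm.mono_right h1.1
      have d2 : Disjoint B F2 := hdisj.symm.mono_right h2.1
      calc F1 = (B ∪ F1) \ B := (Finset.union_sdiff_cancel_left d1).symm
        _ = (B ∪ F2) \ B := by rw [show B ∪ F1 = B ∪ F2 from h]
        _ = F2 := Finset.union_sdiff_cancel_left d2
  -- added simplices are not in C
  have hdisjU : Disjoint (C.filter (fun S => ¬ A ⊆ S))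
      ((A.powerset.filter (fun F => F ≠ A)).image (fun F => B ∪ F)) := by
    rw [Finset.disjoint_left]
    intro S hS hS'
    simp only [Finset.mem_image, Finset.mem_filter, Finset.mem_powerset] at hS'
    obtain ⟨F, _, rfl⟩ := hS'
    exact hB ((hC _ (Finset.mem_filter.mp hS).1).2 B Finset.subset_union_left hBne)
  unfold eulerChar pachner
  rw [Finset.sum_union hdisjU, haddsum]
  have hsplit := Finset.sum_filter_add_sum_filter_not C (fun S => A ⊆ S)
      (fun S => (-1:ℤ)^(S.card - 1))
  rw [hdelsum] at hsplit
  linarith
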